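/- Let s, x, y be vertices in a finite chordal graph such that [sxy]. If the line determined by s and x equals the line determined by s and y, then x is a cut vertex separating s and y, i.e., every path from s to y passes through x. -/

import Mathlib

/-- `b` lies between `a` and `c` in the metric space induced by a graph `G`. -/
def SimpleGraph.Btw {V : Type*} (G : SimpleGraph V) (a b c : V) : Prop :=
  a ≠ b ∧ b ≠ c ∧ a ≠ c ∧ G.dist a b + G.dist b c = G.dist a c

/-- The line determined by two distinct vertices `u` and `v`. -/
def SimpleGraph.line {V : Type*} (G : SimpleGraph V) (u v : V) : Set V :=
  {u, v} ∪ {p | G.Btw p u v ∨ G.Btw u p v ∨ G.Btw u v p}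

/-- A graph is chordal if every cycle of length at least four has a chord;
equivalently, it contains no induced cycle of length at least four. -/
def SimpleGraph.IsChordal {V : Type*} (G : SimpleGraph V) : Prop :=
  ∀ n : ℕ, 4 ≤ n → IsEmpty (SimpleGraph.cycleGraph n ↪g G)


namespace ChordalAux

open SimpleGraph

variable {V : Type*} {G : SimpleGraph V}

lemma dist_triangle' {u v w : V} (h1 : G.Reachable u v) (h2 : G.Reachable v w) :
    G.dist u w ≤ G.dist u v + G.dist v w := by
  obtain ⟨p, hp⟩ := h1.exists_walk_length_eq_dist
  obtain ⟨q, hq⟩ := h2.exists_walk_length_eq_dist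
  calc G.dist u w ≤ (p.append q).length := SimpleGraph.dist_le _
  _ = _ := by rw [SimpleGraph.Walk.length_append, hp, hq]

lemma exists_walk_getVert_left {u v : V} (p : G.Walk u v) (i : ℕ) :
    ∃ w : G.Walk u (p.getVert i), w.length ≤ i := by
  induction p generalizing i with
  | nil => exact ⟨Walk.nil, by simp⟩
  | cons h q ih =>
    cases i with
    | zero => exact ⟨Walk.nil, by simp; rfl⟩
    | succ i =>
      obtain ⟨w, hw⟩ := ih i
      exact ⟨Walk.cons h w, by simpa using hw⟩

lemma exists_walk_getVert_right {u v : V} (p : G.Walk u v) (i : ℕ) :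
    ∃ w : G.Walk (p.getVert i) v, w.length ≤ p.length - i := by
  induction p generalizing i with
  | nil => exact ⟨Walk.nil, by simp⟩
  | cons h q ih =>
    cases i with
    | zero => exact ⟨Walk.cons h q, by simp; exact le_refl _⟩
    | succ i =>
      obtain ⟨w, hw⟩ := ih i
      exact ⟨w, by simpa using Nat.le_trans hw (by omega)⟩

lemma shortest_mid {u v : V} (p : G.Walk u v) (hp : p.length = G.dist u v)
    {i j : ℕ} (hij : i ≤ j) (hj : j ≤ p.length)
    (q : G.Walk (p.getVert i) (p.getVert j)) : j - i ≤ q.length := by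
  obtain ⟨A, hA⟩ := exists_walk_getVert_left p i
  obtain ⟨C, hC⟩ := exists_walk_getVert_right p j
  have h := SimpleGraph.dist_le (A.append (q.append C))
  rw [Walk.length_append, Walk.length_append] at h
  omega

lemma fin_sub_eq_one_iff {n : ℕ} (u v : Fin (n + 2)) :
    u - v = 1 ↔ (u.val = v.val + 1 ∨ (u.val = 0 ∧ v.val = n + 1)) := by
  have hu := u.isLt; have hv := v.isLt
  have hval : (u - v).val = (n + 2 - v.val + u.val) % (n + 2) := by
    rw [Fin.sub_def]
  rw [Fin.ext_iff, hval, Fin.val_one]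
  constructor
  · intro h
    rcases Nat.lt_or_ge (n + 2 - v.val + u.val) (n + 2) with hc | hc
    · rw [Nat.mod_eq_of_lt hc] at h; omega
    · rw [Nat.mod_eq_sub_mod hc, Nat.mod_eq_of_lt (by omega)] at h; omega
  · intro h
    rcases h with h | h
    · have e : n + 2 - v.val + u.val = (n + 2) + 1 := by omega
      rw [e, Nat.add_mod_left]
      exact Nat.mod_eq_of_lt (by omega)
    · have e : n + 2 - v.val + u.val = 1 := by omega
      rw [e]
      exact Nat.mod_eq_of_lt (by omega)

lemma cycleGraph_adj_iff {n : ℕ} (u v : Fin (n + 2)) :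
    (SimpleGraph.cycleGraph (n + 2)).Adj u v ↔
      (u.val = v.val + 1 ∨ v.val = u.val + 1 ∨
        (u.val = 0 ∧ v.val = n + 1) ∨ (v.val = 0 ∧ u.val = n + 1)) := by
  rw [SimpleGraph.cycleGraph_adj, fin_sub_eq_one_iff, fin_sub_eq_one_iff]
  tauto


/-- The graph obtained by deleting the vertex `x`. -/
abbrev delVert (G : SimpleGraph V) (x : V) : SimpleGraph {v : V // v ≠ x} :=
  G.comap Subtype.val

lemma reachable_del {x : V} :
    ∀ {u v : V} (p : G.Walk u v), x ∉ p.support → ∀ (hu : u ≠ x) (hv : v ≠ x),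
      (delVert G x).Reachable ⟨u, hu⟩ ⟨v, hv⟩ := by
  intro u v p
  induction p with
  | nil => intro _ hu hv; exact Reachable.refl _
  | @cons u w v h q ih =>
    intro hp hu hv
    have hx1 : x ∉ q.support := fun hh => hp (by rw [Walk.support_cons]; exact List.mem_cons_of_mem _ hh)
    have hw : w ≠ x := fun he => hx1 (he ▸ Walk.start_mem_support q)
    have hadj : (delVert G x).Adj ⟨u, hu⟩ ⟨w, hw⟩ := SimpleGraph.comap_adj.mpr h
    exact hadj.reachable.trans (ih hx1 hw hv)

lemma fanAux (hG : G.IsChordal) (x : V) :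
    ∀ (n : ℕ) (a b : {v : V // v ≠ x}), (delVert G x).dist a b = n →
      (delVert G x).Reachable a b → G.Adj x a.val → G.Adj x b.val →
      ∃ q : G.Walk a.val b.val, ∀ v ∈ q.support, G.Adj x v := by
  intro n
  induction n using Nat.strong_induction_on with
  | _ n ih =>
  intro a b hd hr hxa hxb
  obtain ⟨p, hppath, hpd⟩ := hr.exists_path_of_dist
  have hplen : p.length = n := by rw [hpd, hd]
  by_cases hn0 : n = 0
  · have hab : a = b := hr.dist_eq_zero_iff.mp (by rw [hd, hn0])
    subst hab
    refine ⟨Walk.nil, ?_⟩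
    intro v hv
    simp only [Walk.support_nil, List.mem_singleton] at hv
    exact hv ▸ hxa
  by_cases hn1 : n = 1
  · have hadj : (delVert G x).Adj a b := SimpleGraph.dist_eq_one_iff_adj.mp (by rw [hd, hn1])
    refine ⟨Walk.cons (SimpleGraph.comap_adj.mp hadj) Walk.nil, ?_⟩
    intro v hv
    simp only [Walk.support_cons, Walk.support_nil, List.mem_cons, List.mem_singleton,
      List.not_mem_nil, or_false] at hv
    rcases hv with rfl | rfl
    exacts [hxa, hxb]
  have hn2 : 2 ≤ n := by omega
  have hget0 : p.getVert 0 = a := p.getVert_zero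
  have hgetL : p.getVert n = b := by rw [← hplen]; exact p.getVert_length
  have hex : ∃ i, 0 < i ∧ i < n ∧ G.Adj x (p.getVert i).val := by
    by_contra hno
    push_neg at hno
    have hginj : ∀ i j, i ≤ n → j ≤ n → p.getVert i = p.getVert j → i = j := by
      intro i j hi hj he
      rcases Nat.lt_trichotomy i j with hlt | he' | hlt
      · have h := shortest_mid p hpd hlt.le (by omega : j ≤ p.length)
          ((Walk.nil : (delVert G x).Walk (p.getVert j) (p.getVert j)).copy he.symm rfl)
        simp only [Walk.length_copy, Walk.length_nil] at h
        omega
      · exact he'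
      · have h := shortest_mid p hpd hlt.le (by omega : i ≤ p.length)
          ((Walk.nil : (delVert G x).Walk (p.getVert i) (p.getVert i)).copy he rfl)
        simp only [Walk.length_copy, Walk.length_nil] at h
        omega
    have hcons : ∀ i j, i ≤ n → j ≤ n → G.Adj (p.getVert i).val (p.getVert j).val →
        (j = i + 1 ∨ i = j + 1) := by
      intro i j hi hj hadj
      rcases Nat.lt_trichotomy i j with hlt | he' | hlt
      · have h := shortest_mid p hpd hlt.le (by omega : j ≤ p.length)
          (Walk.cons (SimpleGraph.comap_adj.mpr hadj) Walk.nil)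
        simp only [Walk.length_cons, Walk.length_nil] at h
        omega
      · exfalso; rw [he'] at hadj; exact G.irrefl hadj
      · have h := shortest_mid p hpd hlt.le (by omega : i ≤ p.length)
          (Walk.cons (SimpleGraph.comap_adj.mpr hadj.symm) Walk.nil)
        simp only [Walk.length_cons, Walk.length_nil] at h
        omega
    have hadjc : ∀ i, i < n → G.Adj (p.getVert i).val (p.getVert (i + 1)).val := by
      intro i hi
      exact SimpleGraph.comap_adj.mp (p.adj_getVert_succ (by omega))
    set f : Fin (n + 2) → V := fun k => if k.val = 0 then x else (p.getVert (k.val - 1)).val with hf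
    have hfval0 : ∀ k : Fin (n + 2), k.val = 0 → f k = x := by
      intro k h; simp only [hf]; exact if_pos h
    have hfvalp : ∀ k : Fin (n + 2), k.val ≠ 0 → f k = (p.getVert (k.val - 1)).val := by
      intro k h; simp only [hf]; exact if_neg h
    have finj : Function.Injective f := by
      intro u v h
      have hu := u.isLt; have hv := v.isLt
      by_cases hu0 : u.val = 0 <;> by_cases hv0 : v.val = 0
      · exact Fin.ext (by omega)
      · rw [hfval0 u hu0, hfvalp v hv0] at h
        exact absurd h.symm (p.getVert (v.val - 1)).prop
      · rw [hfvalp u hu0, hfval0 v hv0] at h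
        exact absurd h (p.getVert (u.val - 1)).prop
      · rw [hfvalp u hu0, hfvalp v hv0] at h
        have := hginj (u.val - 1) (v.val - 1) (by omega) (by omega) (Subtype.ext h)
        exact Fin.ext (by omega)
    have fiff : ∀ u v : Fin (n + 2), G.Adj (f u) (f v) ↔ (SimpleGraph.cycleGraph (n + 2)).Adj u v := by
      intro u v
      rw [cycleGraph_adj_iff]
      have hu := u.isLt; have hv := v.isLt
      by_cases hu0 : u.val = 0 <;> by_cases hv0 : v.val = 0
      · rw [hfval0 u hu0, hfval0 v hv0]
        exact iff_of_false (G.irrefl) (by omega)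
      · rw [hfval0 u hu0, hfvalp v hv0]
        constructor
        · intro h
          by_cases h1 : v.val = 1
          · omega
          by_cases h2 : v.val = n + 1
          · omega
          exact absurd h (hno (v.val - 1) (by omega) (by omega))
        · intro h
          have hc : v.val = 1 ∨ v.val = n + 1 := by omega
          rcases hc with h1 | h1
          · have e : v.val - 1 = 0 := by omega
            rw [e, hget0]; exact hxa
          · have e : v.val - 1 = n := by omega
            rw [e, hgetL]; exact hxb
      · rw [hfvalp u hu0, hfval0 v hv0]
        constructor
        · intro h
          by_cases h1 : u.val = 1
          · omega
          by_cases h2 : u.val = n + 1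
          · omega
          exact absurd h.symm (hno (u.val - 1) (by omega) (by omega))
        · intro h
          have hc : u.val = 1 ∨ u.val = n + 1 := by omega
          rcases hc with h1 | h1
          · have e : u.val - 1 = 0 := by omega
            rw [e, hget0]; exact hxa.symm
          · have e : u.val - 1 = n := by omega
            rw [e, hgetL]; exact hxb.symm
      · rw [hfvalp u hu0, hfvalp v hv0]
        constructor
        · intro h
          have := hcons (u.val - 1) (v.val - 1) (by omega) (by omega) h
          omega
        · intro h
          have hc : v.val = u.val + 1 ∨ u.val = v.val + 1 := by omega
          rcases hc with h1 | h1
          · have e : v.val - 1 = (u.val - 1) + 1 := by omega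
            rw [e]; exact hadjc (u.val - 1) (by omega)
          · have e : u.val - 1 = (v.val - 1) + 1 := by omega
            rw [e]; exact (hadjc (v.val - 1) (by omega)).symm
    exact (hG (n + 2) (by omega)).false ⟨⟨f, finj⟩, fun {u v} => fiff u v⟩
  obtain ⟨i, hi0, hiL, hxi⟩ := hex
  obtain ⟨wA, hwA⟩ := exists_walk_getVert_left p i
  obtain ⟨wC, hwC⟩ := exists_walk_getVert_right p i
  have hdA : (delVert G x).dist a (p.getVert i) ≤ i := le_trans (SimpleGraph.dist_le wA) hwA
  have hdC : (delVert G x).dist (p.getVert i) b ≤ n - i := by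
    refine le_trans (SimpleGraph.dist_le wC) ?_
    omega
  obtain ⟨q₁, hq₁⟩ := ih ((delVert G x).dist a (p.getVert i)) (by omega) a (p.getVert i) rfl
    ⟨wA⟩ hxa hxi
  obtain ⟨q₂, hq₂⟩ := ih ((delVert G x).dist (p.getVert i) b) (by omega) (p.getVert i) b rfl
    ⟨wC⟩ hxi hxb
  refine ⟨q₁.append q₂, ?_⟩
  intro v hv
  rcases (Walk.mem_support_append_iff _ _).mp hv with h | h
  exacts [hq₁ v h, hq₂ v h]

lemma fan (hG : G.IsChordal) {x w₁ w₂ : V}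
    (h1 : G.Adj x w₁) (h2 : G.Adj x w₂) (Q : G.Walk w₁ w₂) (hQ : x ∉ Q.support) :
    ∃ q : G.Walk w₁ w₂, ∀ v ∈ q.support, G.Adj x v := by
  have hr := reachable_del Q hQ h1.ne' h2.ne'
  obtain ⟨q, hq⟩ := fanAux hG x _ ⟨w₁, h1.ne'⟩ ⟨w₂, h2.ne'⟩ rfl hr h1 h2
  exact ⟨q, hq⟩

lemma mem_line_iff {u v z : V} :
    z ∈ G.line u v ↔ (z = u ∨ z = v ∨ G.Btw z u v ∨ G.Btw u z v ∨ G.Btw u v z) := by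
  simp only [SimpleGraph.line, Set.mem_union, Set.mem_insert_iff, Set.mem_singleton_iff,
    Set.mem_setOf_eq, or_assoc]

lemma typing {s x y : V} (hsx : s ≠ x) (hxy : x ≠ y) (hsy : s ≠ y)
    (hsum : G.dist s x + G.dist x y = G.dist s y)
    (hline : G.line s x = G.line s y)
    (hrsx : G.Reachable s x) (hrxy : G.Reachable x y) {z : V} (hz : G.Adj x z) :
    (G.dist s z + 1 = G.dist s x ∧ G.dist z y = G.dist x y + 1) ∨
    (G.dist s z = G.dist s x ∧ G.dist z y = G.dist x y + 1) ∨
    (G.dist s z = G.dist s x + 1 ∧ G.dist z y + 1 = G.dist x y) := by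
  have ha : 1 ≤ G.dist s x := hrsx.pos_dist_of_ne hsx
  have hb : 1 ≤ G.dist x y := hrxy.pos_dist_of_ne hxy
  have hxz : G.dist x z = 1 := SimpleGraph.dist_eq_one_iff_adj.mpr hz
  have hzx : G.dist z x = 1 := SimpleGraph.dist_eq_one_iff_adj.mpr hz.symm
  have hrsz : G.Reachable s z := hrsx.trans hz.reachable
  have hrzy : G.Reachable z y := hz.symm.reachable.trans hrxy
  have hub : G.dist s z ≤ G.dist s x + 1 := by
    have := dist_triangle' hrsx hz.reachable
    omega
  have hlb : G.dist s x ≤ G.dist s z + 1 := by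
    have := dist_triangle' hrsz hz.symm.reachable
    omega
  have huby : G.dist z y ≤ 1 + G.dist x y := by
    have := dist_triangle' hz.symm.reachable hrxy
    omega
  have hlby : G.dist x y ≤ 1 + G.dist z y := by
    have := dist_triangle' hz.reachable hrzy
    omega
  have hsumz : G.dist s y ≤ G.dist s z + G.dist z y := dist_triangle' hrsz hrzy
  have htri : G.dist s z + 1 = G.dist s x ∨ G.dist s z = G.dist s x ∨
      G.dist s z = G.dist s x + 1 := by omega
  rcases htri with dlow | dmid | dhigh
  · -- level a - 1
    by_cases hzs : z = s
    · subst hzs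
      rw [SimpleGraph.dist_self] at dlow ⊢
      exact Or.inl ⟨by omega, by omega⟩
    · have hmem : z ∈ G.line s x := by
        rw [mem_line_iff]
        right; right; right; left
        exact ⟨fun he => hzs he.symm, hz.ne', hsx, by rw [hzx]; omega⟩
      rw [hline, mem_line_iff] at hmem
      left
      refine ⟨dlow, ?_⟩
      rcases hmem with he | he | hB | hB | hB
      · exact absurd he hzs
      · exfalso; rw [he] at dlow; omega
      · exfalso
        obtain ⟨_, _, _, h4⟩ := hB
        rw [SimpleGraph.dist_comm (u := z) (v := s)] at h4
        have h5 : G.dist s z = 0 := by omega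
        exact hzs (hrsz.dist_eq_zero_iff.mp h5).symm
      · obtain ⟨_, _, _, h4⟩ := hB; omega
      · exfalso; obtain ⟨_, _, _, h4⟩ := hB; omega
  · -- level a
    have hzs : z ≠ s := by intro he; rw [he, SimpleGraph.dist_self] at dmid; omega
    have hnot : z ∉ G.line s x := by
      rw [mem_line_iff]
      push_neg
      refine ⟨hzs, hz.ne', ?_, ?_, ?_⟩
      · rintro ⟨_, _, _, h4⟩
        rw [SimpleGraph.dist_comm (u := z) (v := s), hzx] at h4
        omega
      · rintro ⟨_, _, _, h4⟩
        rw [hzx] at h4; omega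
      · rintro ⟨_, _, _, h4⟩
        rw [hxz] at h4; omega
    have hnot' : z ∉ G.line s y := by rw [← hline]; exact hnot
    have hzy : z ≠ y := by intro he; rw [he] at dmid; omega
    rw [mem_line_iff] at hnot'
    push_neg at hnot'
    obtain ⟨_, _, _, hnB, _⟩ := hnot'
    right; left
    refine ⟨dmid, ?_⟩
    have hne : G.dist s z + G.dist z y ≠ G.dist s y := fun hh =>
      hnB ⟨Ne.symm hzs, hzy, hsy, hh⟩
    omega
  · -- level a + 1
    have hzs : z ≠ s := by intro he; rw [he, SimpleGraph.dist_self] at dhigh; omega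
    have hmem : z ∈ G.line s x := by
      rw [mem_line_iff]
      right; right; right; right
      exact ⟨hsx, hz.ne, Ne.symm hzs, by rw [hxz]; omega⟩
    rw [hline, mem_line_iff] at hmem
    right; right
    refine ⟨dhigh, ?_⟩
    rcases hmem with he | he | hB | hB | hB
    · exact absurd he hzs
    · subst he
      rw [SimpleGraph.dist_self]
      omega
    · exfalso
      obtain ⟨_, _, _, h4⟩ := hB
      rw [SimpleGraph.dist_comm (u := z) (v := s)] at h4
      omega
    · obtain ⟨_, _, _, h4⟩ := hB; omega
    · obtain ⟨_, _, _, h4⟩ := hB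
      have h5 : G.dist y z = 0 := by omega
      have h6 : y = z := (hrzy.symm.dist_eq_zero_iff).mp h5
      subst h6
      rw [SimpleGraph.dist_self]
      omega

lemma fan_dist {s x y : V} (hsx : s ≠ x) (hxy : x ≠ y) (hsy : s ≠ y)
    (hsum : G.dist s x + G.dist x y = G.dist s y)
    (hline : G.line s x = G.line s y)
    (hrsx : G.Reachable s x) (hrxy : G.Reachable x y) :
    ∀ (u w : V) (r : G.Walk u w), (∀ v ∈ r.support, G.Adj x v) →
      G.dist s w = G.dist s x + 1 → G.dist s u = G.dist s x + 1 := by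
  intro u w r
  induction r with
  | nil => intro _ h; exact h
  | @cons u u' _ h r ih =>
    intro hsupp hw
    have hu : G.Adj x u := hsupp u (SimpleGraph.Walk.start_mem_support _)
    have hu' : G.Adj x u' := hsupp u' (by
      rw [SimpleGraph.Walk.support_cons]
      exact List.mem_cons_of_mem _ (SimpleGraph.Walk.start_mem_support _))
    have hd' : G.dist s u' = G.dist s x + 1 := ih (fun v hv => hsupp v (by
      rw [SimpleGraph.Walk.support_cons]
      exact List.mem_cons_of_mem _ hv)) hw
    have hy' : G.dist u' y + 1 = G.dist x y := by
      rcases typing hsx hxy hsy hsum hline hrsx hrxy hu' with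
        ⟨h1, _⟩ | ⟨h1, _⟩ | ⟨_, h2⟩
      · omega
      · omega
      · exact h2
    rcases typing hsx hxy hsy hsum hline hrsx hrxy hu with
      ⟨_, h2⟩ | ⟨_, h2⟩ | ⟨h1, _⟩
    · exfalso
      have htri : G.dist u y ≤ G.dist u u' + G.dist u' y :=
        dist_triangle' h.reachable (hu'.symm.reachable.trans hrxy)
      have hone : G.dist u u' = 1 := SimpleGraph.dist_eq_one_iff_adj.mpr h
      omega
    · exfalso
      have htri : G.dist u y ≤ G.dist u u' + G.dist u' y :=
        dist_triangle' h.reachable (hu'.symm.reachable.trans hrxy)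
      have hone : G.dist u u' = 1 := SimpleGraph.dist_eq_one_iff_adj.mpr h
      omega
    · exact h1

end ChordalAux

/-- Lemma 1: in a finite chordal graph, if `[sxy]` and the lines `sx` and `sy`
coincide, then `x` is a cut vertex separating `s` and `y`: every path from
`s` to `y` passes through `x`. -/
theorem stmt1 {V : Type*} [Fintype V] (G : SimpleGraph V) (hG : G.IsChordal)
    (s x y : V) (hsxy : G.Btw s x y) (hline : G.line s x = G.line s y) :
    ∀ p : G.Walk s y, p.IsPath → x ∈ p.support := by
  classical
  intro p hp
  by_contra hx
  obtain ⟨hsx, hxy, hsy, hsum⟩ := hsxy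
  have hrsy : G.Reachable s y := ⟨p⟩
  have hdsy : 0 < G.dist s y := hrsy.pos_dist_of_ne hsy
  have hrsx : G.Reachable s x := by
    by_contra hc
    have h0 : G.dist s x = 0 := SimpleGraph.dist_eq_zero_of_not_reachable hc
    have hrxy' : G.Reachable x y := by
      apply SimpleGraph.Reachable.of_dist_ne_zero
      omega
    exact hc (hrsy.trans hrxy'.symm)
  have hrxy : G.Reachable x y := hrsx.symm.trans hrsy
  have ha : 1 ≤ G.dist s x := hrsx.pos_dist_of_ne hsx
  have hb : 1 ≤ G.dist x y := hrxy.pos_dist_of_ne hxy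
  -- construct w₁ : a neighbor of x towards s, with a walk from w₁ to s avoiding x
  have hw₁ex : ∃ w₁ : V, G.Adj x w₁ ∧ G.dist s w₁ + 1 = G.dist s x ∧
      ∃ T : G.Walk w₁ s, x ∉ T.support := by
    obtain ⟨W₁, hW₁path, hW₁len⟩ := hrsx.exists_path_of_dist
    have hR₁path : W₁.reverse.IsPath := hW₁path.reverse
    have hR₁nil : ¬ W₁.reverse.Nil := by
      rw [SimpleGraph.Walk.nil_iff_length_eq, SimpleGraph.Walk.length_reverse]
      omega
    refine ⟨W₁.reverse.getVert 1, SimpleGraph.Walk.adj_snd hR₁nil, ?_, W₁.reverse.tail, ?_⟩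
    · have hT₁len : W₁.reverse.tail.length + 1 = G.dist s x := by
        rw [SimpleGraph.Walk.length_tail_add_one hR₁nil, SimpleGraph.Walk.length_reverse, hW₁len]
      have h1 : G.dist (W₁.reverse.getVert 1) s ≤ W₁.reverse.tail.length :=
        SimpleGraph.dist_le _
      have h2 : G.dist s x ≤ G.dist s (W₁.reverse.getVert 1) +
          G.dist (W₁.reverse.getVert 1) x :=
        ChordalAux.dist_triangle' ⟨W₁.reverse.tail.reverse⟩
          (SimpleGraph.Walk.adj_snd hR₁nil).symm.reachable
      have h3 : G.dist (W₁.reverse.getVert 1) x = 1 :=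
        SimpleGraph.dist_eq_one_iff_adj.mpr (SimpleGraph.Walk.adj_snd hR₁nil).symm
      have hcomm : G.dist s (W₁.reverse.getVert 1) = G.dist (W₁.reverse.getVert 1) s :=
        SimpleGraph.dist_comm
      omega
    · have hnodup := hR₁path.support_nodup
      rw [← SimpleGraph.Walk.cons_support_tail hR₁nil] at hnodup
      exact (List.nodup_cons.mp hnodup).1
  obtain ⟨w₁, hadj₁, hw₁dist, T₁, hT₁sup⟩ := hw₁ex
  -- construct w₂ : a neighbor of x towards y, with a walk from y to w₂ avoiding x
  have hw₂ex : ∃ w₂ : V, G.Adj x w₂ ∧ G.dist w₂ y + 1 = G.dist x y ∧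
      ∃ T : G.Walk y w₂, x ∉ T.support := by
    obtain ⟨W₂, hW₂path, hW₂len⟩ := hrxy.exists_path_of_dist
    have hW₂nil : ¬ W₂.Nil := by
      rw [SimpleGraph.Walk.nil_iff_length_eq]
      omega
    refine ⟨W₂.getVert 1, SimpleGraph.Walk.adj_snd hW₂nil, ?_, W₂.tail.reverse, ?_⟩
    · have hT₂len : W₂.tail.length + 1 = G.dist x y := by
        rw [SimpleGraph.Walk.length_tail_add_one hW₂nil, hW₂len]
      have h1 : G.dist (W₂.getVert 1) y ≤ W₂.tail.length := SimpleGraph.dist_le _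
      have h2 : G.dist x y ≤ G.dist x (W₂.getVert 1) + G.dist (W₂.getVert 1) y :=
        ChordalAux.dist_triangle' (SimpleGraph.Walk.adj_snd hW₂nil).reachable ⟨W₂.tail⟩
      have h3 : G.dist x (W₂.getVert 1) = 1 :=
        SimpleGraph.dist_eq_one_iff_adj.mpr (SimpleGraph.Walk.adj_snd hW₂nil)
      omega
    · rw [SimpleGraph.Walk.support_reverse, List.mem_reverse]
      have hnodup := hW₂path.support_nodup
      rw [← SimpleGraph.Walk.cons_support_tail hW₂nil] at hnodup
      exact (List.nodup_cons.mp hnodup).1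
  obtain ⟨w₂, hadj₂, hw₂dist, T₂, hT₂sup⟩ := hw₂ex
  have hsw₂ : G.dist s w₂ = G.dist s x + 1 := by
    rcases ChordalAux.typing hsx hxy hsy hsum hline hrsx hrxy hadj₂ with
      ⟨_, h2⟩ | ⟨_, h2⟩ | ⟨h1, _⟩
    · omega
    · omega
    · exact h1
  have hQsup : x ∉ (T₁.append (p.append T₂)).support := by
    intro hmem
    rcases (SimpleGraph.Walk.mem_support_append_iff _ _).mp hmem with h | h
    · exact hT₁sup h
    rcases (SimpleGraph.Walk.mem_support_append_iff _ _).mp h with h' | h'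
    · exact hx h'
    · exact hT₂sup h'
  obtain ⟨q, hq⟩ := ChordalAux.fan hG hadj₁ hadj₂ (T₁.append (p.append T₂)) hQsup
  have := ChordalAux.fan_dist hsx hxy hsy hsum hline hrsx hrxy w₁ w₂ q hq hsw₂
  omega
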